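/- Let p ≥ 2. Consider any finite sequence S of words, each of length k−1 over the alphabet {0,1}, each containing exactly one symbol '1'. Suppose S satisfies: whenever p of the words in S have their '1' in the same position s, then strictly between the first and the p-th of these words there is a word whose '1' occurs in a position strictly smaller than s. Then the length of S is at most p^(k−1) − 1. -/

import Mathlib

/-- The "process lemma": a sequence of `N` words over `{0,1}`, each of length `k-1`
containing exactly one `1`, such that among any `p` words whose `1` is at the same
position there is, strictly between the first and the `p`-th of them, a word whose
`1` is at a strictly smaller position, has length `N ≤ p^(k-1) - 1`. -/
theorem stmt_3 (p k N : ℕ) (hp : 2 ≤ p) (hk : 2 ≤ k)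
    (w : Fin N → List Bool)
    (hlen : ∀ i, (w i).length = k - 1)
    (hone : ∀ i, (w i).count true = 1)
    (hcond : ∀ f : Fin p → Fin N, StrictMono f →
      (∀ a b : Fin p, (w (f a)).idxOf true = (w (f b)).idxOf true) →
      ∃ m : Fin N, f ⟨0, by omega⟩ < m ∧ m < f ⟨p - 1, by omega⟩ ∧
        (w m).idxOf true < (w (f ⟨0, by omega⟩)).idxOf true) :
    N ≤ p ^ (k - 1) - 1 := by
  classical
  set s : Fin N → ℕ := fun i => (w i).idxOf true with hs
  have hslt : ∀ i, s i < k - 1 := by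
    intro i
    have hmem : true ∈ w i := by
      have h := hone i
      have : 0 < (w i).count true := by omega
      exact List.count_pos_iff.mp this
    have := List.idxOf_lt_length_iff.mpr hmem
    rw [hlen i] at this
    exact this
  have key : ∀ j : ℕ, (Finset.univ.filter (fun i : Fin N => s i < j)).card ≤ p ^ j - 1 := by
    intro j
    induction j with
    | zero => simp
    | succ j ih =>
      set A := Finset.univ.filter (fun i : Fin N => s i < j) with hA
      set B := Finset.univ.filter (fun i : Fin N => s i = j) with hB
      have hsplit : Finset.univ.filter (fun i : Fin N => s i < j + 1) = A ∪ B := by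
        ext i
        simp only [hA, hB, Finset.mem_union, Finset.mem_filter, Finset.mem_univ, true_and]
        omega
      have hdisj : Disjoint A B := by
        rw [Finset.disjoint_left]
        intro x hx hx'
        simp only [hA, hB, Finset.mem_filter, Finset.mem_univ, true_and] at hx hx'
        omega
      set g : Fin N → WithTop (Fin N) := fun b => (A.filter (fun x => b < x)).min with hg
      have hfiber : ∀ v ∈ B.image g, (B.filter (fun x => g x = v)).card ≤ p - 1 := by
        intro v _
        by_contra hcon
        push_neg at hcon
        have hp1 : p ≤ (B.filter (fun x => g x = v)).card := by omega
        obtain ⟨T, hTsub, hTcard⟩ := Finset.exists_subset_card_eq hp1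
        set e := T.orderIsoOfFin hTcard with he
        set f : Fin p → Fin N := fun i => (e i : Fin N) with hf
        have hfmono : StrictMono f := by
          intro a b hab
          exact e.strictMono hab
        have hfB : ∀ i, f i ∈ B.filter (fun x => g x = v) := fun i => hTsub (e i).2
        have hfs : ∀ i, s (f i) = j := by
          intro i
          have := (Finset.mem_filter.mp (hfB i)).1
          simp only [hB, Finset.mem_filter, Finset.mem_univ, true_and] at this
          exact this
        have heq : ∀ a b : Fin p, (w (f a)).idxOf true = (w (f b)).idxOf true := by
          intro a b
          have := (hfs a).trans (hfs b).symm
          exact this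
        obtain ⟨m, hm1, hm2, hm3⟩ := hcond f hfmono heq
        have hmA : m ∈ A := by
          simp only [hA, Finset.mem_filter, Finset.mem_univ, true_and]
          have h0 := hfs ⟨0, by omega⟩
          have hsm : s m < s (f ⟨0, by omega⟩) := hm3
          omega
        have hv0 : g (f ⟨0, by omega⟩) = v := (Finset.mem_filter.mp (hfB _)).2
        have hvp : g (f ⟨p - 1, by omega⟩) = v := (Finset.mem_filter.mp (hfB _)).2
        have hmin : v ≤ (m : WithTop (Fin N)) := by
          rw [← hv0]
          apply Finset.min_le
          simp only [Finset.mem_filter]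
          exact ⟨hmA, hm1⟩
        obtain ⟨a, hav⟩ : ∃ a : Fin N, v = (a : WithTop (Fin N)) := by
          cases v with
          | top => exact absurd hmin (by simp)
          | coe a => exact ⟨a, rfl⟩
        have haf : a ∈ A.filter (fun x => f ⟨p - 1, by omega⟩ < x) :=
          Finset.mem_of_min (hvp.trans hav)
        have halt : f ⟨p - 1, by omega⟩ < a := (Finset.mem_filter.mp haf).2
        have ham : a ≤ m := by
          rw [hav] at hmin
          exact_mod_cast hmin
        exact absurd (lt_trans hm2 halt) (not_lt.mpr ham)
      have hBcard : B.card ≤ (p - 1) * (B.image g).card :=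
        Finset.card_le_mul_card_image B (p - 1) hfiber
      have himg : (B.image g).card ≤ A.card + 1 := by
        have hsub : B.image g ⊆ insert ⊤ (A.image (fun a : Fin N => (a : WithTop (Fin N)))) := by
          intro v hv
          obtain ⟨b, _, hbv⟩ := Finset.mem_image.mp hv
          rcases hv' : v with _ | a
          · exact Finset.mem_insert_self _ _
          · apply Finset.mem_insert_of_mem
            apply Finset.mem_image.mpr
            refine ⟨a, ?_, rfl⟩
            have hma : a ∈ A.filter (fun x => b < x) :=
              Finset.mem_of_min (hbv.trans hv')
            exact (Finset.mem_filter.mp hma).1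
        calc (B.image g).card ≤ (insert ⊤ (A.image (fun a : Fin N => (a : WithTop (Fin N))))).card :=
              Finset.card_le_card hsub
          _ ≤ (A.image (fun a : Fin N => (a : WithTop (Fin N)))).card + 1 := Finset.card_insert_le _ _
          _ ≤ A.card + 1 := by gcongr; exact Finset.card_image_le
      have hcard : (Finset.univ.filter (fun i : Fin N => s i < j + 1)).card = A.card + B.card := by
        rw [hsplit, Finset.card_union_of_disjoint hdisj]
      have hpow : 1 ≤ p ^ j := Nat.one_le_pow _ _ (by omega)
      have hpow' : p ^ (j + 1) = p * p ^ j := by ring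
      have hAB : B.card ≤ (p - 1) * (A.card + 1) := le_trans hBcard (by gcongr)
      have hA1 : A.card + 1 ≤ p ^ j := by omega
      rw [hcard]
      have h2 : (p - 1) * (A.card + 1) = p * (A.card + 1) - (A.card + 1) := by
        rw [Nat.sub_mul, one_mul]
      have h3 : A.card + 1 ≤ p * (A.card + 1) := Nat.le_mul_of_pos_left _ (by omega)
      have h4 : p * (A.card + 1) ≤ p * p ^ j := Nat.mul_le_mul_left _ hA1
      omega
  have hfin : Finset.univ.filter (fun i : Fin N => s i < k - 1) = Finset.univ := by
    apply Finset.filter_true_of_mem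
    intro i _
    exact hslt i
  have := key (k - 1)
  rw [hfin, Finset.card_univ, Fintype.card_fin] at this
  exact this
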